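/- (Non-conservativeness of the horizon-one inner approximation.) Fix x_0 ∈ ℝ^{n_x}. The following two statements are equivalent: (i) there exists K ∈ ℝ^{n_u×n_x} such that F_x x_0 ≤ b_x, F_u(Kx_0) ≤ b_u, and for every admissible (Δ_A, Δ_B, w): F_T((Â + Δ_A)x_0 + (B̂ + Δ_B)Kx_0 + w) ≤ b_T; (ii) there exist K ∈ ℝ^{n_u×n_x} and σ_0 > 0 such that ε_A‖x_0‖_∞ + ε_B‖Kx_0‖_∞ + σ_w ≤ σ_0, F_x x_0 ≤ b_x, F_u(Kx_0) ≤ b_u, and for every row f of F_T with corresponding entry b of b_T: fᵀ(Â + B̂K)x_0 + ‖f‖_1 σ_0 ≤ b. -/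

import Mathlib

open Matrix Finset

noncomputable section

/-- The ℓ¹ norm of a vector in `ℝⁿ`: `‖v‖₁ = ∑ i, |v i|`.
(The ℓ∞ norm is the default norm `‖·‖` on `Fin n → ℝ`.) -/
def norm1 {n : ℕ} (v : Fin n → ℝ) : ℝ := ∑ i, |v i|

/-- The operator norm `‖M‖_{∞→∞}` induced by the sup norm, i.e. the maximum
absolute row sum. -/
def opInf {n m : ℕ} (M : Matrix (Fin n) (Fin m) ℝ) : ℝ := ⨆ i, ∑ j, |M i j|

namespace Stmt12Aux

def sgn (t : ℝ) : ℝ := if t < 0 then -1 else 1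

lemma abs_sgn (t : ℝ) : |sgn t| = 1 := by
  unfold sgn; split <;> simp

lemma mul_sgn (t : ℝ) : t * sgn t = |t| := by
  unfold sgn; split
  · rw [abs_of_neg (by assumption)]; ring
  · rw [abs_of_nonneg (not_lt.mp (by assumption))]; ring

lemma sgn_mul (t : ℝ) : sgn t * t = |t| := by rw [mul_comm, mul_sgn]

lemma norm1_nonneg {n : ℕ} (v : Fin n → ℝ) : 0 ≤ norm1 v :=
  Finset.sum_nonneg fun _ _ => abs_nonneg _

lemma exists_argmax {n : ℕ} (hn : 1 ≤ n) (v : Fin n → ℝ) : ∃ j, |v j| = ‖v‖ := by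
  haveI : Nonempty (Fin n) := ⟨⟨0, hn⟩⟩
  obtain ⟨j, _, hj⟩ := Finset.exists_max_image Finset.univ (fun k => |v k|)
    Finset.univ_nonempty
  refine ⟨j, le_antisymm ?_ ?_⟩
  · simpa [Real.norm_eq_abs] using norm_le_pi_norm v j
  · exact pi_norm_le_iff_of_nonneg (abs_nonneg _) |>.2 fun k => by
      simpa [Real.norm_eq_abs] using hj k (Finset.mem_univ k)

lemma dot_le {p : ℕ} (f v : Fin p → ℝ) (c : ℝ)
    (h : ∀ k, |v k| ≤ c) : f ⬝ᵥ v ≤ norm1 f * c := by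
  rw [norm1, dotProduct, Finset.sum_mul]
  refine Finset.sum_le_sum fun k _ => ?_
  calc f k * v k ≤ |f k * v k| := le_abs_self _
    _ = |f k| * |v k| := abs_mul _ _
    _ ≤ |f k| * c := mul_le_mul_of_nonneg_left (h k) (abs_nonneg _)

lemma mulVec_entry_bound {n m : ℕ} (Δ : Matrix (Fin n) (Fin m) ℝ)
    (x : Fin m → ℝ) (ε : ℝ) (hΔ : opInf Δ ≤ ε) (k : Fin n) :
    |(Δ.mulVec x) k| ≤ ε * ‖x‖ := by
  have hrow : ∑ j, |Δ k j| ≤ ε := by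
    have h := le_ciSup (f := fun i => ∑ j, |Δ i j|)
      (Set.Finite.bddAbove (Set.finite_range _)) k
    exact le_trans h hΔ
  calc |(Δ.mulVec x) k| = |∑ j, Δ k j * x j| := by rw [Matrix.mulVec, dotProduct]
    _ ≤ ∑ j, |Δ k j * x j| := Finset.abs_sum_le_sum_abs _ _
    _ = ∑ j, |Δ k j| * |x j| := by simp [abs_mul]
    _ ≤ ∑ j, |Δ k j| * ‖x‖ := Finset.sum_le_sum fun j _ =>
        mul_le_mul_of_nonneg_left (by simpa [Real.norm_eq_abs] using norm_le_pi_norm x j)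
          (abs_nonneg _)
    _ = (∑ j, |Δ k j|) * ‖x‖ := (Finset.sum_mul _ _ _).symm
    _ ≤ ε * ‖x‖ := mul_le_mul_of_nonneg_right hrow (norm_nonneg _)

end Stmt12Aux

open Stmt12Aux

theorem statement12 (nx nu px pu pT : ℕ) (hnx : 1 ≤ nx) (hnu : 1 ≤ nu)
    (Ahat : Matrix (Fin nx) (Fin nx) ℝ) (Bhat : Matrix (Fin nx) (Fin nu) ℝ)
    (εA εB σw : ℝ) (hεA : 0 ≤ εA) (hεB : 0 ≤ εB) (hσw : 0 < σw)
    (Fx : Matrix (Fin px) (Fin nx) ℝ) (bx : Fin px → ℝ)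
    (Fu : Matrix (Fin pu) (Fin nu) ℝ) (bu : Fin pu → ℝ)
    (FT : Matrix (Fin pT) (Fin nx) ℝ) (bT : Fin pT → ℝ)
    (x0 : Fin nx → ℝ) :
    (∃ K : Matrix (Fin nu) (Fin nx) ℝ,
        Fx.mulVec x0 ≤ bx ∧ Fu.mulVec (K.mulVec x0) ≤ bu ∧
        ∀ (ΔA : Matrix (Fin nx) (Fin nx) ℝ) (ΔB : Matrix (Fin nx) (Fin nu) ℝ)
          (w : Fin nx → ℝ), opInf ΔA ≤ εA → opInf ΔB ≤ εB → ‖w‖ ≤ σw →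
          FT.mulVec ((Ahat + ΔA).mulVec x0 + (Bhat + ΔB).mulVec (K.mulVec x0) + w) ≤ bT) ↔
      (∃ (K : Matrix (Fin nu) (Fin nx) ℝ) (σ0 : ℝ), 0 < σ0 ∧
        εA * ‖x0‖ + εB * ‖K.mulVec x0‖ + σw ≤ σ0 ∧
        Fx.mulVec x0 ≤ bx ∧ Fu.mulVec (K.mulVec x0) ≤ bu ∧
        ∀ i : Fin pT, FT i ⬝ᵥ (Ahat + Bhat * K).mulVec x0 + norm1 (FT i) * σ0 ≤ bT i) := by
  haveI : Nonempty (Fin nx) := ⟨⟨0, hnx⟩⟩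
  haveI : Nonempty (Fin nu) := ⟨⟨0, hnu⟩⟩
  constructor
  · rintro ⟨K, hx, hu, hT⟩
    refine ⟨K, εA * ‖x0‖ + εB * ‖K.mulVec x0‖ + σw, ?_, le_refl _, hx, hu, fun i => ?_⟩
    · have h1 : 0 ≤ εA * ‖x0‖ := mul_nonneg hεA (norm_nonneg _)
      have h2 : 0 ≤ εB * ‖K.mulVec x0‖ := mul_nonneg hεB (norm_nonneg _)
      linarith
    obtain ⟨jA, hjA⟩ := exists_argmax hnx x0
    obtain ⟨jB, hjB⟩ := exists_argmax hnu (K.mulVec x0)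
    set f : Fin nx → ℝ := fun k => FT i k with hf
    set ΔA : Matrix (Fin nx) (Fin nx) ℝ :=
      Matrix.of fun k j => if j = jA then εA * sgn (f k) * sgn (x0 jA) else 0 with hΔA
    set ΔB : Matrix (Fin nx) (Fin nu) ℝ :=
      Matrix.of fun k j => if j = jB then εB * sgn (f k) * sgn ((K.mulVec x0) jB) else 0 with hΔB
    set w : Fin nx → ℝ := fun k => σw * sgn (f k) with hw
    have hΔAop : opInf ΔA ≤ εA := by
      refine ciSup_le fun k => ?_
      have habs : ∀ j, |ΔA k j| = if j = jA then εA else 0 := by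
        intro j
        simp only [hΔA, Matrix.of_apply]
        split
        · rw [abs_mul, abs_mul, abs_sgn, abs_sgn, abs_of_nonneg hεA]; ring
        · simp
      simp [habs]
    have hΔBop : opInf ΔB ≤ εB := by
      refine ciSup_le fun k => ?_
      have habs : ∀ j, |ΔB k j| = if j = jB then εB else 0 := by
        intro j
        simp only [hΔB, Matrix.of_apply]
        split
        · rw [abs_mul, abs_mul, abs_sgn, abs_sgn, abs_of_nonneg hεB]; ring
        · simp
      simp [habs]
    have hwn : ‖w‖ ≤ σw := by
      refine pi_norm_le_iff_of_nonneg hσw.le |>.2 fun k => ?_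
      simp [hw, Real.norm_eq_abs, abs_mul, abs_sgn, abs_of_nonneg hσw.le]
    have hAmul : ∀ k, (ΔA.mulVec x0) k = εA * ‖x0‖ * sgn (f k) := by
      intro k
      rw [Matrix.mulVec, dotProduct, Finset.sum_eq_single jA]
      · have h := sgn_mul (x0 jA)
        rw [hjA] at h
        simp only [hΔA, Matrix.of_apply, eq_self_iff_true, if_true]
        linear_combination εA * sgn (f k) * h
      · intro j _ hj; simp [hΔA, hj]
      · intro h; exact absurd (Finset.mem_univ jA) h
    have hBmul : ∀ k, (ΔB.mulVec (K.mulVec x0)) k = εB * ‖K.mulVec x0‖ * sgn (f k) := by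
      intro k
      rw [Matrix.mulVec, dotProduct, Finset.sum_eq_single jB]
      · have h := sgn_mul ((K.mulVec x0) jB)
        rw [hjB] at h
        simp only [hΔB, Matrix.of_apply, eq_self_iff_true, if_true]
        linear_combination εB * sgn (f k) * h
      · intro j _ hj; simp [hΔB, hj]
      · intro h; exact absurd (Finset.mem_univ jB) h
    have hvec : (Ahat + ΔA).mulVec x0 + (Bhat + ΔB).mulVec (K.mulVec x0) + w
        = (Ahat + Bhat * K).mulVec x0 + (ΔA.mulVec x0 + ΔB.mulVec (K.mulVec x0) + w) := by
      simp only [Matrix.add_mulVec, Matrix.add_mul, Matrix.mulVec_mulVec]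
      abel
    have key : f ⬝ᵥ ((Ahat + ΔA).mulVec x0 + (Bhat + ΔB).mulVec (K.mulVec x0) + w) ≤ bT i :=
      hT ΔA ΔB w hΔAop hΔBop hwn i
    rw [hvec, dotProduct_add] at key
    have hnoise : f ⬝ᵥ (ΔA.mulVec x0 + ΔB.mulVec (K.mulVec x0) + w)
        = norm1 f * (εA * ‖x0‖ + εB * ‖K.mulVec x0‖ + σw) := by
      rw [dotProduct, norm1, Finset.sum_mul]
      refine Finset.sum_congr rfl fun k _ => ?_
      have hwk : w k = σw * sgn (f k) := rfl
      simp only [Pi.add_apply, hAmul k, hBmul k, hwk]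
      linear_combination (εA * ‖x0‖ + εB * ‖K.mulVec x0‖ + σw) * mul_sgn (f k)
    rw [hnoise] at key
    exact key
  · rintro ⟨K, σ0, hσ0pos, hσ0, hx, hu, hT⟩
    refine ⟨K, hx, hu, fun ΔA ΔB w hA hB hwn => ?_⟩
    rw [Pi.le_def]
    intro i
    set f : Fin nx → ℝ := fun k => FT i k with hf
    have hvec : (Ahat + ΔA).mulVec x0 + (Bhat + ΔB).mulVec (K.mulVec x0) + w
        = (Ahat + Bhat * K).mulVec x0 + (ΔA.mulVec x0 + ΔB.mulVec (K.mulVec x0) + w) := by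
      simp only [Matrix.add_mulVec, Matrix.add_mul, Matrix.mulVec_mulVec]
      abel
    have hgoal : FT.mulVec ((Ahat + ΔA).mulVec x0 + (Bhat + ΔB).mulVec (K.mulVec x0) + w) i
        = f ⬝ᵥ (Ahat + Bhat * K).mulVec x0
          + f ⬝ᵥ (ΔA.mulVec x0 + ΔB.mulVec (K.mulVec x0) + w) := by
      show f ⬝ᵥ _ = _
      rw [hvec, dotProduct_add]
    rw [hgoal]
    have hbound : f ⬝ᵥ (ΔA.mulVec x0 + ΔB.mulVec (K.mulVec x0) + w)
        ≤ norm1 f * (εA * ‖x0‖ + εB * ‖K.mulVec x0‖ + σw) := by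
      refine dot_le f _ _ fun k => ?_
      have h1 := mulVec_entry_bound ΔA x0 εA hA k
      have h2 := mulVec_entry_bound ΔB (K.mulVec x0) εB hB k
      have h3 : |w k| ≤ σw := by
        calc |w k| ≤ ‖w‖ := by simpa [Real.norm_eq_abs] using norm_le_pi_norm w k
          _ ≤ σw := hwn
      calc |(ΔA.mulVec x0 + ΔB.mulVec (K.mulVec x0) + w) k|
          ≤ |(ΔA.mulVec x0) k| + |(ΔB.mulVec (K.mulVec x0)) k| + |w k| := by
            simp only [Pi.add_apply]
            exact le_trans (abs_add_le _ _) (add_le_add (abs_add_le _ _) le_rfl)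
        _ ≤ εA * ‖x0‖ + εB * ‖K.mulVec x0‖ + σw := by linarith
    have hσ0' : norm1 f * (εA * ‖x0‖ + εB * ‖K.mulVec x0‖ + σw) ≤ norm1 f * σ0 :=
      mul_le_mul_of_nonneg_left hσ0 (norm1_nonneg f)
    have hTi : f ⬝ᵥ (Ahat + Bhat * K).mulVec x0 + norm1 f * σ0 ≤ bT i := hT i
    linarith
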